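/- If x_1,...,x_m and y_1,...,y_m are pairwise distinct reals with x_i ≠ y_j for all i,j, then the Cauchy matrix A = [1/(x_i - y_j)] is invertible, and its inverse B = [b_{ij}] is given by b_{ij} = (x_j - y_i) · A_j(y_i) · B_i(x_j), where A_i(x) = ∏_{ℓ≠i} (x - x_ℓ)/(x_i - x_ℓ) and B_j(y) = ∏_{ℓ≠j} (y - y_ℓ)/(y_j - y_ℓ) are the Lagrange basis polynomials for the nodes (x_i) and (y_j) respectively. -/

import Mathlib

open Polynomial Finset

lemma interp_sum {m : ℕ} (v : Fin m → ℝ) (hv : Function.Injective v)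
    (p : Polynomial ℝ) (hp : p.degree < m) (t : ℝ) :
    ∑ j, p.eval (v j) * ∏ ℓ ∈ Finset.univ.erase j, (t - v ℓ) / (v j - v ℓ) = p.eval t := by
  have hvs : Set.InjOn v (Finset.univ : Finset (Fin m)) := hv.injOn
  have hd : p.degree < (#(Finset.univ : Finset (Fin m)) : ℕ) := by
    simpa using hp
  have := Lagrange.eq_interpolate hvs hd
  conv_rhs => rw [this]
  rw [Lagrange.interpolate_apply, eval_finset_sum]
  refine Finset.sum_congr rfl fun j _ => ?_
  rw [eval_mul, eval_C, Lagrange.basis, eval_prod]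
  congr 1
  refine Finset.prod_congr rfl fun ℓ _ => ?_
  simp [Lagrange.basisDivisor, div_eq_mul_inv, mul_comm]

lemma cauchy_key (m : ℕ) (x y : Fin m → ℝ)
    (hx : Function.Injective x) (hy : Function.Injective y)
    (h : ∀ i j, x i ≠ y j) (i k : Fin m) :
    ∑ j, (1 / (x i - y j)) * ((x k - y j) *
        (∏ ℓ ∈ Finset.univ.erase k, (y j - x ℓ) / (x k - x ℓ)) *
        (∏ ℓ ∈ Finset.univ.erase j, (x k - y ℓ) / (y j - y ℓ))) =
      if i = k then 1 else 0 := by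
  have hD : (∏ ℓ ∈ Finset.univ.erase k, (x k - x ℓ)) ≠ 0 := by
    refine Finset.prod_ne_zero_iff.mpr fun ℓ hℓ => sub_ne_zero.mpr ?_
    exact fun he => (Finset.mem_erase.mp hℓ).1 (hx he).symm
  set D : ℝ := ∏ ℓ ∈ Finset.univ.erase k, (x k - x ℓ) with hDdef
  by_cases hik : i = k
  · subst hik
    set p : Polynomial ℝ := C D⁻¹ * ∏ ℓ ∈ Finset.univ.erase i, (X - C (x ℓ)) with hp
    have hdeg : p.degree < m := by
      rw [hp, degree_mul, degree_prod]
      simp only [degree_X_sub_C, Finset.sum_const, nsmul_eq_mul, mul_one]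
      rw [degree_C (inv_ne_zero hD), zero_add,
        Finset.card_erase_of_mem (Finset.mem_univ i), Finset.card_univ, Fintype.card_fin]
      exact_mod_cast Nat.sub_lt i.pos one_pos
    have hs := interp_sum y hy p hdeg (x i)
    have hpe : ∀ t : ℝ, p.eval t = D⁻¹ * ∏ ℓ ∈ Finset.univ.erase i, (t - x ℓ) := by
      intro t; simp [hp, eval_prod]
    rw [if_pos rfl]
    calc ∑ j, (1 / (x i - y j)) * ((x i - y j) *
            (∏ ℓ ∈ Finset.univ.erase i, (y j - x ℓ) / (x i - x ℓ)) *
            (∏ ℓ ∈ Finset.univ.erase j, (x i - y ℓ) / (y j - y ℓ)))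
        = ∑ j, p.eval (y j) * ∏ ℓ ∈ Finset.univ.erase j, (x i - y ℓ) / (y j - y ℓ) := by
          refine Finset.sum_congr rfl fun j _ => ?_
          rw [hpe, Finset.prod_div_distrib, ← hDdef, ← mul_assoc]
          congr 1
          have hc : x i - y j ≠ 0 := sub_ne_zero.mpr (h i j)
          field_simp
      _ = p.eval (x i) := hs
      _ = 1 := by rw [hpe]; exact inv_mul_cancel₀ hD
  · have hm : 1 < m := by
      have := Fintype.one_lt_card_iff.mpr ⟨i, k, hik⟩
      simpa using this
    set e : Finset (Fin m) := (Finset.univ.erase k).erase i with he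
    have hik' : i ∈ Finset.univ.erase k := Finset.mem_erase.mpr ⟨hik, Finset.mem_univ i⟩
    set p : Polynomial ℝ := C D⁻¹ * ((X - C (x k)) * ∏ ℓ ∈ e, (X - C (x ℓ))) with hp
    have hdeg : p.degree < m := by
      rw [hp, degree_mul, degree_mul, degree_prod]
      simp only [degree_X_sub_C, Finset.sum_const, nsmul_eq_mul, mul_one]
      rw [degree_C (inv_ne_zero hD), zero_add, he,
        Finset.card_erase_of_mem hik',
        Finset.card_erase_of_mem (Finset.mem_univ k), Finset.card_univ, Fintype.card_fin]
      have : (1 : WithBot ℕ) + ((m - 1 - 1 : ℕ) : WithBot ℕ) = ((m - 1 : ℕ) : WithBot ℕ) := by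
        rw [← Nat.cast_one, ← Nat.cast_add]
        congr 1
        omega
      rw [this]
      exact_mod_cast Nat.sub_lt (by omega) one_pos
    have hpe : ∀ t : ℝ, p.eval t = D⁻¹ * ((t - x k) * ∏ ℓ ∈ e, (t - x ℓ)) := by
      intro t; simp [hp, eval_prod]
    have hs := interp_sum y hy p hdeg (x k)
    rw [if_neg hik]
    calc ∑ j, (1 / (x i - y j)) * ((x k - y j) *
            (∏ ℓ ∈ Finset.univ.erase k, (y j - x ℓ) / (x k - x ℓ)) *
            (∏ ℓ ∈ Finset.univ.erase j, (x k - y ℓ) / (y j - y ℓ)))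
        = ∑ j, p.eval (y j) * ∏ ℓ ∈ Finset.univ.erase j, (x k - y ℓ) / (y j - y ℓ) := by
          refine Finset.sum_congr rfl fun j _ => ?_
          rw [hpe, Finset.prod_div_distrib, ← hDdef,
            ← Finset.mul_prod_erase _ _ hik', ← he, ← mul_assoc]
          congr 1
          have hc : x i - y j ≠ 0 := sub_ne_zero.mpr (h i j)
          field_simp
          ring
      _ = p.eval (x k) := hs
      _ = 0 := by rw [hpe]; ring


/-- The Cauchy matrix `[1/(x i - y j)]` with pairwise distinct nodes is invertible,
and its inverse has entries `b i j = (x j - y i) · A_j(y i) · B_i(x j)`, where `A_j` and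
`B_i` are the Lagrange basis polynomials at the nodes `x` and `y` respectively. -/
theorem cauchy_matrix_inverse (m : ℕ) (x y : Fin m → ℝ)
    (hx : Function.Injective x) (hy : Function.Injective y)
    (h : ∀ i j, x i ≠ y j) :
    IsUnit (Matrix.of fun i j : Fin m => 1 / (x i - y j)) ∧
      ∀ i j : Fin m,
        (Matrix.of fun i j : Fin m => 1 / (x i - y j))⁻¹ i j =
          (x j - y i) *
            (∏ ℓ ∈ Finset.univ.erase j, (y i - x ℓ) / (x j - x ℓ)) *
            (∏ ℓ ∈ Finset.univ.erase i, (x j - y ℓ) / (y i - y ℓ)) := by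
  set A : Matrix (Fin m) (Fin m) ℝ := Matrix.of fun i j : Fin m => 1 / (x i - y j) with hA
  set M : Matrix (Fin m) (Fin m) ℝ := Matrix.of fun i j : Fin m =>
    (x j - y i) * (∏ ℓ ∈ Finset.univ.erase j, (y i - x ℓ) / (x j - x ℓ)) *
      (∏ ℓ ∈ Finset.univ.erase i, (x j - y ℓ) / (y i - y ℓ)) with hM
  have hAM : A * M = 1 := by
    ext i k
    rw [Matrix.mul_apply]
    simp only [hA, hM, Matrix.of_apply, Matrix.one_apply]
    exact cauchy_key m x y hx hy h i k
  refine ⟨(Matrix.isUnit_iff_isUnit_det A).mpr (Matrix.isUnit_det_of_right_inverse hAM), fun i j => ?_⟩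
  rw [Matrix.inv_eq_right_inv hAM]
  simp [hM]
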